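/- arXiv:1910.14276 — 4 statements merged into one kernel-verified Lean document; each statement's English description precedes it below -/
import Mathlib

section
/- For every edge $e$ of a connected graph with resistances $r > 0$ and demand $d$, the partial derivative of the electric energy with respect to the resistance of edge $e$ equals the square of the flow on that edge: $\frac{\partial}{\partial r_e}\mathcal{E}_r(\hat{f}_r) = [\hat{f}_r]_e^2$, where $\hat{f}_r$ is the electric $d$-flow for resistances $r$. -/
open scoped Matrix

lemma quadForm {V E : Type*} [Fintype V] [Fintype E] [DecidableEq E]
    (B : Matrix E V ℝ) (r : E → ℝ) (z : V → ℝ) :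
    z ⬝ᵥ (B.transpose * Matrix.diagonal (fun e => (r e)⁻¹) * B).mulVec z
      = ∑ e, (r e)⁻¹ * (B.mulVec z e) ^ 2 := by
  rw [← Matrix.mulVec_mulVec, ← Matrix.mulVec_mulVec,
    Matrix.dotProduct_mulVec, ← Matrix.mulVec_transpose, Matrix.transpose_transpose]
  simp only [dotProduct, Matrix.mulVec_diagonal]
  exact Finset.sum_congr rfl fun e _ => by ring

lemma rankOne {V E : Type*} [Fintype V] [Fintype E] [DecidableEq E]
    (B : Matrix E V ℝ) (r r' : E → ℝ) (e : E) (h : ∀ e', e' ≠ e → r' e' = r e') :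
    B.transpose * Matrix.diagonal (fun e' => (r' e')⁻¹) * B
      = B.transpose * Matrix.diagonal (fun e' => (r e')⁻¹) * B
        + ((r' e)⁻¹ - (r e)⁻¹) • Matrix.vecMulVec (fun w => B e w) (fun w => B e w) := by
  classical
  have hdiag : (fun e' => (r' e')⁻¹)
      = fun e' => (r e')⁻¹ + (if e' = e then ((r' e)⁻¹ - (r e)⁻¹) else 0) := by
    funext e'
    by_cases he : e' = e
    · subst he; simp
    · simp [he, h e' he]
  rw [hdiag, ← Matrix.diagonal_add, Matrix.mul_add, Matrix.add_mul]
  congr 1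
  ext i j
  simp only [Matrix.mul_apply, Matrix.diagonal_apply, Matrix.transpose_apply,
    Matrix.smul_apply, Matrix.vecMulVec_apply, smul_eq_mul, mul_ite, mul_zero, ite_mul,
    zero_mul, Finset.sum_ite_eq, Finset.sum_ite_eq', Finset.mem_univ, if_true]
  ring

lemma vecMulVec_mulVec' {V : Type*} [Fintype V] (w v x : V → ℝ) :
    (Matrix.vecMulVec w v).mulVec x = (v ⬝ᵥ x) • w := by
  funext i
  simp [Matrix.mulVec, Matrix.vecMulVec_apply, dotProduct, Finset.mul_sum,
    Finset.sum_mul, mul_comm, mul_assoc, mul_left_comm]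

lemma mpAux {V : Type*} [Fintype V] (L M : Matrix V V ℝ) (hsym : L.transpose = L)
    (h1 : L * M * L = L) (h3 : (L * M).transpose = L * M) : L * (L * M) = L := by
  have e2 : (L * M * L).transpose = L * (L * M) := by
    rw [Matrix.transpose_mul, hsym, h3]
  rw [← e2, h1, hsym]

/-- The partial derivative of the electric energy `E_r(f̂_r) = dᵀ L_r† d` with
respect to the resistance of edge `e` equals the square of the flow on that
edge: `∂E/∂r_e = [f̂_r]_e²`, where `f̂_r = diag(r)⁻¹ B L_r† d`. -/
theorem deriv_energy_eq_flow_sq {V E : Type*} [Fintype V] [Fintype E]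
    [DecidableEq V] [DecidableEq E]
    (B : Matrix E V ℝ)
    (hrows : ∀ e : E, ∃ u v : V, u ≠ v ∧
      ∀ w, B e w = (if w = v then (1 : ℝ) else 0) - (if w = u then 1 else 0))
    (hconn : ∀ x : V → ℝ, B.mulVec x = 0 → ∃ c : ℝ, ∀ v, x v = c)
    (d : V → ℝ) (hd : ∑ v, d v = 0)
    (Ld : (E → ℝ) → Matrix V V ℝ)
    (hLd : ∀ r : E → ℝ, (∀ e, 0 < r e) →
      (B.transpose * Matrix.diagonal (fun e => (r e)⁻¹) * B) * Ld r *
          (B.transpose * Matrix.diagonal (fun e => (r e)⁻¹) * B) =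
        B.transpose * Matrix.diagonal (fun e => (r e)⁻¹) * B ∧
      Ld r * (B.transpose * Matrix.diagonal (fun e => (r e)⁻¹) * B) * Ld r = Ld r ∧
      ((B.transpose * Matrix.diagonal (fun e => (r e)⁻¹) * B) * Ld r).transpose =
        (B.transpose * Matrix.diagonal (fun e => (r e)⁻¹) * B) * Ld r ∧
      (Ld r * (B.transpose * Matrix.diagonal (fun e => (r e)⁻¹) * B)).transpose =
        Ld r * (B.transpose * Matrix.diagonal (fun e => (r e)⁻¹) * B))
    (r : E → ℝ) (hr : ∀ e, 0 < r e) :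
    ∀ e : E, HasDerivAt (fun t : ℝ => d ⬝ᵥ (Ld (Function.update r e t)).mulVec d)
      ((B.mulVec ((Ld r).mulVec d) e / r e) ^ 2) (r e) := by
  intro e
  obtain ⟨u₀, v₀, huv₀, hBe⟩ := hrows e
  haveI : Nonempty V := ⟨u₀⟩
  have hrowsum : ∀ e' : E, ∑ w, B e' w = 0 := by
    intro e'
    obtain ⟨u, v, huv, hB⟩ := hrows e'
    simp [hB, Finset.sum_sub_distrib]
  have hB1 : B.mulVec (fun _ => (1 : ℝ)) = 0 := by
    funext e'
    simpa [Matrix.mulVec, dotProduct] using hrowsum e'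
  set L : Matrix V V ℝ := B.transpose * Matrix.diagonal (fun e => (r e)⁻¹) * B with hL
  set M : Matrix V V ℝ := Ld r with hM
  obtain ⟨h1, h2, h3, h4⟩ := hLd r hr
  have hLsym : L.transpose = L := by
    rw [hL, Matrix.transpose_mul, Matrix.transpose_mul, Matrix.transpose_transpose,
      Matrix.diagonal_transpose, Matrix.mul_assoc]
  have hLL : L * (L * M) = L := mpAux L M hLsym h1 h3
  -- solving L x = y for y with zero sum
  have hsolve : ∀ y : V → ℝ, (∑ w, y w = 0) → L.mulVec (M.mulVec y) = y := by
    intro y hy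
    set w : V → ℝ := y - (L * M).mulVec y with hw
    have hLw : L.mulVec w = 0 := by
      rw [hw, Matrix.mulVec_sub, Matrix.mulVec_mulVec, ← Matrix.mul_assoc,
        Matrix.mul_assoc L L M, hLL, sub_self]
    have hquad : w ⬝ᵥ L.mulVec w = 0 := by rw [hLw]; simp
    have hBw : B.mulVec w = 0 := by
      rw [hL, quadForm] at hquad
      funext e'
      have hnn : ∀ i ∈ Finset.univ, (0:ℝ) ≤ (r i)⁻¹ * (B.mulVec w i) ^ 2 := fun i _ =>
        mul_nonneg (inv_nonneg.2 (hr i).le) (sq_nonneg _)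
      have h0 := (Finset.sum_eq_zero_iff_of_nonneg hnn).1 hquad e' (Finset.mem_univ _)
      have hrne : (r e')⁻¹ ≠ 0 := inv_ne_zero (hr e').ne'
      have h0' := (mul_eq_zero.1 h0).resolve_left hrne
      simpa using pow_eq_zero_iff (n := 2) (by norm_num) |>.1 h0'
    obtain ⟨c, hc⟩ := hconn w hBw
    have hsumLM : ∑ v', ((L * M).mulVec y) v' = 0 := by
      have hv1 : (fun _ => (1:ℝ)) ᵥ* L = 0 := by
        rw [← hLsym, Matrix.vecMul_transpose, hL]
        rw [← Matrix.mulVec_mulVec, ← Matrix.mulVec_mulVec, hB1]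
        simp
      calc ∑ v', ((L * M).mulVec y) v' = (fun _ => (1:ℝ)) ⬝ᵥ (L * M).mulVec y := by
            simp [dotProduct]
        _ = ((fun _ => (1:ℝ)) ᵥ* (L * M)) ⬝ᵥ y := Matrix.dotProduct_mulVec _ _ _
        _ = (((fun _ => (1:ℝ)) ᵥ* L) ᵥ* M) ⬝ᵥ y := by rw [Matrix.vecMul_vecMul]
        _ = 0 := by rw [hv1]; simp
    have hsumw : ∑ v', w v' = 0 := by
      rw [hw]; simp [Finset.sum_sub_distrib, hy, hsumLM]
    have hc0 : c = 0 := by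
      have hcc : (Fintype.card V : ℝ) * c = 0 := by
        rw [← hsumw]
        rw [Finset.sum_congr rfl (fun v' _ => hc v')]
        simp [Finset.sum_const, nsmul_eq_mul]
      have hcard : (Fintype.card V : ℝ) ≠ 0 := by exact_mod_cast Fintype.card_ne_zero
      exact (mul_eq_zero.1 hcc).resolve_left hcard
    have hw0 : y - (L * M).mulVec y = 0 := by rw [← hw]; funext v'; rw [hc v', hc0]; rfl
    rw [Matrix.mulVec_mulVec]
    exact (sub_eq_zero.1 hw0).symm
  set bv : V → ℝ := fun w => B e w with hbv
  have hsumbv : ∑ w, bv w = 0 := hrowsum e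
  set g : V → ℝ := M.mulVec d with hg
  set hh : V → ℝ := M.mulVec bv with hhh
  have hLg : L.mulVec g = d := hsolve d hd
  have hLh : L.mulVec hh = bv := hsolve bv hsumbv
  set c1 : ℝ := bv ⬝ᵥ g with hc1
  set β : ℝ := bv ⬝ᵥ hh with hβ
  have hdh : d ⬝ᵥ hh = c1 := by
    rw [hc1, ← hLg, dotProduct_comm, Matrix.dotProduct_mulVec,
      ← hLsym, Matrix.vecMul_transpose, hLh]
  have hflow : B.mulVec g e = c1 := rfl
  -- the key energy formula for perturbed resistances
  have key : ∀ t : ℝ, 0 < t → 1 + (t⁻¹ - (r e)⁻¹) * β ≠ 0 →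
      d ⬝ᵥ (Ld (Function.update r e t)).mulVec d
        = d ⬝ᵥ g - (t⁻¹ - (r e)⁻¹) * c1 ^ 2 / (1 + (t⁻¹ - (r e)⁻¹) * β) := by
    intro t ht hden
    set s : ℝ := t⁻¹ - (r e)⁻¹ with hs
    set r' : E → ℝ := Function.update r e t with hr'def
    have hr' : ∀ e', 0 < r' e' := by
      intro e'
      rw [hr'def, Function.update_apply]
      split
      · exact ht
      · exact hr _
    set L' : Matrix V V ℝ := B.transpose * Matrix.diagonal (fun e' => (r' e')⁻¹) * B with hL'
    obtain ⟨h1', _, _, _⟩ := hLd r' hr'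
    have hL'sym : L'.transpose = L' := by
      rw [hL', Matrix.transpose_mul, Matrix.transpose_mul, Matrix.transpose_transpose,
        Matrix.diagonal_transpose, Matrix.mul_assoc]
    have hre : (r' e)⁻¹ = t⁻¹ := by rw [hr'def, Function.update_self]
    have hrank : L' = L + s • Matrix.vecMulVec bv bv := by
      rw [hL', hL, rankOne B r r' e (fun e' he' => Function.update_of_ne he' _ _), hre, hs]
    set α : ℝ := s * c1 / (1 + s * β) with hα
    have hαeq : α * (1 + s * β) = s * c1 := div_mul_cancel₀ _ hden
    set x : V → ℝ := g - α • hh with hx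
    have hL'x : L'.mulVec x = d := by
      rw [hrank, hx, Matrix.add_mulVec, Matrix.mulVec_sub, Matrix.mulVec_smul, hLg, hLh,
        Matrix.smul_mulVec, Matrix.mulVec_sub, Matrix.mulVec_smul,
        vecMulVec_mulVec', vecMulVec_mulVec', ← hc1, ← hβ]
      funext v'
      simp only [Pi.add_apply, Pi.sub_apply, Pi.smul_apply, smul_eq_mul]
      linear_combination (-(bv v')) * hαeq
    have hE : d ⬝ᵥ (Ld r').mulVec d = x ⬝ᵥ d := by
      conv_lhs => rw [← hL'x]
      rw [Matrix.mulVec_mulVec]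
      have hvm : L'.mulVec x = x ᵥ* L' :=
        by calc L'.mulVec x = L'.transpose.mulVec x := by rw [hL'sym]
             _ = x ᵥ* L' := Matrix.mulVec_transpose L' x
      rw [hvm, ← Matrix.dotProduct_mulVec, Matrix.mulVec_mulVec, ← Matrix.mul_assoc, h1', hL'x]
    rw [hE, hx, sub_dotProduct, smul_dotProduct,
      dotProduct_comm g d, dotProduct_comm hh d, hdh,
      smul_eq_mul, hα]
    ring
  -- now the calculus part
  have hne : (r e) ≠ 0 := (hr e).ne'
  have hu : HasDerivAt (fun t : ℝ => t⁻¹ - (r e)⁻¹) (-((r e) ^ 2)⁻¹) (r e) :=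
    (hasDerivAt_inv hne).sub_const _
  have hnum : HasDerivAt (fun t : ℝ => (t⁻¹ - (r e)⁻¹) * c1 ^ 2)
      (-((r e) ^ 2)⁻¹ * c1 ^ 2) (r e) := hu.mul_const _
  have hdenD : HasDerivAt (fun t : ℝ => 1 + (t⁻¹ - (r e)⁻¹) * β)
      (-((r e) ^ 2)⁻¹ * β) (r e) := by
    simpa using (hu.mul_const β).const_add 1
  have hden1 : (1 : ℝ) + ((r e)⁻¹ - (r e)⁻¹) * β = 1 := by
    rw [sub_self, zero_mul, add_zero]
  have hdenne : (1 : ℝ) + ((r e)⁻¹ - (r e)⁻¹) * β ≠ 0 := by rw [hden1]; norm_num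
  have hF := (hnum.div hdenD hdenne).const_sub (d ⬝ᵥ g)
  have hev : (fun t : ℝ => d ⬝ᵥ (Ld (Function.update r e t)).mulVec d)
      =ᶠ[nhds (r e)] (fun t : ℝ =>
        d ⬝ᵥ g - (t⁻¹ - (r e)⁻¹) * c1 ^ 2 / (1 + (t⁻¹ - (r e)⁻¹) * β)) := by
    have ev1 : ∀ᶠ t : ℝ in nhds (r e), 0 < t := eventually_gt_nhds (hr e)
    have ev2 : ∀ᶠ t : ℝ in nhds (r e), 1 + (t⁻¹ - (r e)⁻¹) * β ≠ 0 :=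
      hdenD.continuousAt.eventually_ne hdenne
    filter_upwards [ev1, ev2] with t ht1 ht2 using key t ht1 ht2
  refine HasDerivAt.congr_of_eventuallyEq ?_ hev
  convert hF using 1
  · rfl
  rw [hflow, hden1]
  field_simp
  ring
end

section
/- Let $G$ be a connected graph with incidence matrix $B$, resistances $r \in \mathbb{R}^E_{>0}$, demand $d$ orthogonal to the all-ones vector, and electric $d$-flow $\hat{f}_r$ with energy $\mathcal{E}_r = \mathcal{E}_r(\hat{f}_r) > 0$. For any $r' \in \mathbb{R}^E_{\ge 0}$ with $r'_e \le r_e$ for all $e$, the electric flow $\hat{f}_{r+r'}$ for resistances $r+r'$ satisfies $\log \mathcal{E}_{r+r'}(\hat{f}_{r+r'}) - \log \mathcal{E}_r(\hat{f}_r) \ge \frac{1}{2}\sum_{e \in E} \frac{r'_e [\hat{f}_r]_e^2}{\mathcal{E}_r(\hat{f}_r)}$. -/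
open scoped Matrix

/-- Energy boosting: increasing each resistance by `r'_e ≤ r_e` increases the
logarithm of the electric energy by at least `(1/2)∑_e r'_e [f̂_r]_e² / E_r(f̂_r)`. -/
theorem log_energy_increase {V E : Type*} [Fintype V] [Fintype E] [DecidableEq V]
    (B : Matrix E V ℝ)
    (hrows : ∀ e : E, ∃ u v : V, u ≠ v ∧
      ∀ w, B e w = (if w = v then (1 : ℝ) else 0) - (if w = u then 1 else 0))
    (hconn : ∀ x : V → ℝ, B.mulVec x = 0 → ∃ c : ℝ, ∀ v, x v = c)
    (d : V → ℝ) (hd : ∑ v, d v = 0)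
    (r : E → ℝ) (hr : ∀ e, 0 < r e)
    (r' : E → ℝ) (hr'0 : ∀ e, 0 ≤ r' e) (hr'le : ∀ e, r' e ≤ r e)
    (f1 : E → ℝ) (hf1d : B.transpose.mulVec f1 = d)
    (hf1min : ∀ f : E → ℝ, B.transpose.mulVec f = d →
      ∑ e, r e * f1 e ^ 2 ≤ ∑ e, r e * f e ^ 2)
    (f2 : E → ℝ) (hf2d : B.transpose.mulVec f2 = d)
    (hf2min : ∀ f : E → ℝ, B.transpose.mulVec f = d →
      ∑ e, (r e + r' e) * f2 e ^ 2 ≤ ∑ e, (r e + r' e) * f e ^ 2)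
    (hE : 0 < ∑ e, r e * f1 e ^ 2) :
    Real.log (∑ e, (r e + r' e) * f2 e ^ 2) - Real.log (∑ e, r e * f1 e ^ 2) ≥
      (1 / 2) * ∑ e, r' e * f1 e ^ 2 / (∑ e, r e * f1 e ^ 2) := by
  classical
  set E1 : ℝ := ∑ e, r e * f1 e ^ 2 with hE1def
  set E2 : ℝ := ∑ e, (r e + r' e) * f2 e ^ 2 with hE2def
  set a : ℝ := ∑ e, r' e * f1 e ^ 2 with hadef
  have hrr' : ∀ e, 0 < r e + r' e := fun e => by have := hr e; have := hr'0 e; linarith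
  have ha0 : 0 ≤ a := Finset.sum_nonneg fun e _ => mul_nonneg (hr'0 e) (sq_nonneg _)
  have haE : a ≤ E1 :=
    Finset.sum_le_sum fun e _ => mul_le_mul_of_nonneg_right (hr'le e) (sq_nonneg _)
  -- First-order optimality: ∑ r f1 (f2 - f1) = 0
  have horth : ∑ e, r e * f1 e * f2 e = E1 := by
    set S : ℝ := ∑ e, r e * f1 e * (f2 e - f1 e) with hSdef
    set Q : ℝ := ∑ e, r e * (f2 e - f1 e) ^ 2 with hQdef
    have hQ0 : 0 ≤ Q :=
      Finset.sum_nonneg fun e _ => mul_nonneg (hr e).le (sq_nonneg _)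
    have key : ∀ t : ℝ, 0 ≤ 2 * t * S + t ^ 2 * Q := by
      intro t
      have hfeas : B.transpose.mulVec (f1 + t • (f2 - f1)) = d := by
        rw [Matrix.mulVec_add, Matrix.mulVec_smul, Matrix.mulVec_sub, hf1d, hf2d]
        simp
      have hmin := hf1min _ hfeas
      have expand : ∑ e, r e * (f1 + t • (f2 - f1)) e ^ 2
          = E1 + (2 * t * S + t ^ 2 * Q) := by
        rw [hE1def, hSdef, hQdef, Finset.mul_sum, Finset.mul_sum,
          ← Finset.sum_add_distrib, ← Finset.sum_add_distrib]
        refine Finset.sum_congr rfl fun e _ => ?_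
        simp only [Pi.add_apply, Pi.smul_apply, Pi.sub_apply, smul_eq_mul]
        ring
      rw [expand] at hmin
      linarith
    have hS : S = 0 := by
      have h1 := key (-S / (Q + 1))
      have hQ1 : (0:ℝ) < Q + 1 := by linarith
      have h2 : 0 ≤ (2 * (-S / (Q + 1)) * S + (-S / (Q + 1)) ^ 2 * Q) * (Q + 1) ^ 2 :=
        mul_nonneg h1 (sq_nonneg _)
      have h3 : (2 * (-S / (Q + 1)) * S + (-S / (Q + 1)) ^ 2 * Q) * (Q + 1) ^ 2
          = S ^ 2 * (-(Q + 2)) := by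
        field_simp
        ring
      rw [h3] at h2
      nlinarith [sq_nonneg S]
    have : ∑ e, r e * f1 e * (f2 e - f1 e)
        = (∑ e, r e * f1 e * f2 e) - E1 := by
      rw [hE1def, ← Finset.sum_sub_distrib]
      refine Finset.sum_congr rfl fun e _ => by ring
    rw [hSdef] at hS
    rw [this] at hS
    linarith
  -- Cauchy–Schwarz: E1² ≤ E2 * D
  set D : ℝ := ∑ e, r e ^ 2 * f1 e ^ 2 / (r e + r' e) with hDdef
  have hCS : E1 ^ 2 ≤ E2 * D := by
    have h := Finset.sum_mul_sq_le_sq_mul_sq Finset.univ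
      (fun e => Real.sqrt (r e + r' e) * f2 e)
      (fun e => r e * f1 e / Real.sqrt (r e + r' e))
    have hprod : ∀ e : E, Real.sqrt (r e + r' e) * f2 e *
        (r e * f1 e / Real.sqrt (r e + r' e)) = r e * f1 e * f2 e := by
      intro e
      have hs : Real.sqrt (r e + r' e) ≠ 0 :=
        ne_of_gt (Real.sqrt_pos.mpr (hrr' e))
      field_simp
    have hsq1 : ∀ e : E, (Real.sqrt (r e + r' e) * f2 e) ^ 2
        = (r e + r' e) * f2 e ^ 2 := by
      intro e
      rw [mul_pow, Real.sq_sqrt (hrr' e).le]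
    have hsq2 : ∀ e : E, (r e * f1 e / Real.sqrt (r e + r' e)) ^ 2
        = r e ^ 2 * f1 e ^ 2 / (r e + r' e) := by
      intro e
      rw [div_pow, mul_pow, Real.sq_sqrt (hrr' e).le]
    calc E1 ^ 2 = (∑ e, r e * f1 e * f2 e) ^ 2 := by rw [horth]
      _ = (∑ e, Real.sqrt (r e + r' e) * f2 e *
            (r e * f1 e / Real.sqrt (r e + r' e))) ^ 2 := by
          congr 1; exact Finset.sum_congr rfl fun e _ => (hprod e).symm
      _ ≤ (∑ e, (Real.sqrt (r e + r' e) * f2 e) ^ 2) *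
            ∑ e, (r e * f1 e / Real.sqrt (r e + r' e)) ^ 2 := h
      _ = E2 * D := by
          rw [hE2def, hDdef]
          congr 1
          · exact Finset.sum_congr rfl fun e _ => hsq1 e
          · exact Finset.sum_congr rfl fun e _ => hsq2 e
  -- D ≤ E1 - a/2
  have hD : D ≤ E1 - a / 2 := by
    have : E1 - a / 2 = ∑ e, (r e - r' e / 2) * f1 e ^ 2 := by
      rw [hE1def, hadef, Finset.sum_div, ← Finset.sum_sub_distrib]
      refine Finset.sum_congr rfl fun e _ => by ring
    rw [this, hDdef]
    refine Finset.sum_le_sum fun e _ => ?_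
    rw [div_le_iff₀ (hrr' e)]
    have h2 := hr'0 e; have h3 := hr'le e
    nlinarith [mul_nonneg (mul_nonneg h2 (sub_nonneg.2 h3)) (sq_nonneg (f1 e))]
  have hE1a : 0 < E1 - a / 2 := by linarith
  -- E2 * (E1 - a/2) ≥ E1²
  have hE2lb : E1 ^ 2 ≤ E2 * (E1 - a / 2) := by
    have hE2nn : 0 ≤ E2 := Finset.sum_nonneg fun e _ => mul_nonneg (hrr' e).le (sq_nonneg _)
    calc E1 ^ 2 ≤ E2 * D := hCS
      _ ≤ E2 * (E1 - a / 2) := mul_le_mul_of_nonneg_left hD hE2nn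
  have hE2pos : 0 < E2 := by
    rcases lt_or_ge 0 E2 with h | h
    · exact h
    · exfalso
      nlinarith [sq_nonneg E1]
  -- take logs
  have hlog1 : 2 * Real.log E1 ≤ Real.log E2 + Real.log (E1 - a / 2) := by
    have h := Real.log_le_log (by positivity) hE2lb
    rw [Real.log_mul (ne_of_gt hE2pos) (ne_of_gt hE1a), Real.log_pow] at h
    push_cast at h
    linarith
  have hlog2 : Real.log (E1 - a / 2) - Real.log E1 ≤ -(a / (2 * E1)) := by
    have hx : (0:ℝ) < (E1 - a / 2) / E1 := div_pos hE1a hE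
    have h := Real.log_le_sub_one_of_pos hx
    rw [Real.log_div (ne_of_gt hE1a) (ne_of_gt hE)] at h
    have : (E1 - a / 2) / E1 - 1 = -(a / (2 * E1)) := by
      field_simp
      ring
    linarith [this ▸ h]
  have hrhs : ∑ e, r' e * f1 e ^ 2 / E1 = a / E1 := by
    rw [hadef, Finset.sum_div]
  rw [hrhs]
  have : (1 / 2) * (a / E1) = a / (2 * E1) := by ring
  rw [this]
  linarith
end

section
/- Minimax identity for budgeted energy maximization: let $B$ be the incidence matrix of a connected graph, $R = \mathrm{diag}(r)$ with $r > 0$, $C$ a positive diagonal matrix, $d$ a demand orthogonal to the all-ones vector, and $W \ge 0$. Then $\max_{r' \ge 0, \|Cr'\|_1 \le W} \min_{B^Tf = d} f^T(R + \mathrm{diag}(r'))f = \min_{B^Tf = d} \left( f^TRf + W\|C^{-1/2}f\|_\infty^2 \right)$. -/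
open scoped Matrix

open scoped RealInnerProductSpace
open Finset Filter Topology

lemma bem_feas {V E : Type*} [Fintype V] [Fintype E] [DecidableEq V]
    (B : Matrix E V ℝ)
    (hconn : ∀ x : V → ℝ, B.mulVec x = 0 → ∃ c : ℝ, ∀ v, x v = c)
    (d : V → ℝ) (hd : ∑ v, d v = 0) :
    ∃ f : E → ℝ, B.transpose.mulVec f = d := by
  classical
  set ι : (V → ℝ) ≃ EuclideanSpace ℝ V := (WithLp.equiv 2 (V → ℝ)).symm with hι
  let T : (E → ℝ) →ₗ[ℝ] EuclideanSpace ℝ V :=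
    { toFun := fun f => ι (B.transpose.mulVec f)
      map_add' := fun a b => by
        show ι _ = ι _ + ι _
        rw [Matrix.mulVec_add]; rfl
      map_smul' := fun c a => by
        show ι _ = c • ι _
        rw [Matrix.mulVec_smul]; rfl }
  let U : Submodule ℝ (EuclideanSpace ℝ V) := LinearMap.range T
  have hdU : ι d ∈ Uᗮᗮ := by
    rw [Submodule.mem_orthogonal]
    intro y hy
    have hy' : ∀ f : E → ℝ, ⟪T f, y⟫ = 0 := fun f =>
      (Submodule.mem_orthogonal U y).1 hy (T f) (LinearMap.mem_range_self T f)
    have hBy : B.mulVec (ι.symm y) = 0 := by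
      funext e
      have := hy' (Pi.single e 1)
      simpa [T, hι, PiLp.inner_apply, RCLike.inner_apply, Matrix.mulVec, dotProduct,
        Matrix.transpose_apply, Pi.single_apply, mul_ite, Finset.sum_ite_eq',
        Finset.mul_sum, mul_comm] using this
    obtain ⟨c, hc⟩ := hconn _ hBy
    have h2 : ⟪y, ι d⟫ = ∑ v, c * d v := by
      rw [PiLp.inner_apply]
      refine Finset.sum_congr rfl fun v _ => ?_
      have : y v = c := hc v
      simp [RCLike.inner_apply, this, hι]
      ring
    rw [h2, ← Finset.mul_sum, hd, mul_zero]
  rw [Submodule.orthogonal_orthogonal] at hdU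
  obtain ⟨f, hf⟩ := hdU
  exact ⟨f, congrArg ι.symm hf⟩

lemma bem_min {V E : Type*} [Fintype V] [Fintype E] [DecidableEq V] [Nonempty E]
    (B : Matrix E V ℝ) (d : V → ℝ)
    (r : E → ℝ) (hr : ∀ e, 0 < r e)
    (C : E → ℝ) (hC : ∀ e, 0 < C e)
    (W : ℝ) (hW : 0 ≤ W)
    (f₀ : E → ℝ) (hf₀ : B.transpose.mulVec f₀ = d) :
    ∃ fs : E → ℝ, B.transpose.mulVec fs = d ∧
      ∀ f : E → ℝ, B.transpose.mulVec f = d →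
        (∑ e, r e * fs e ^ 2) + W * univ.sup' univ_nonempty (fun e => fs e ^ 2 / C e)
          ≤ (∑ e, r e * f e ^ 2) + W * univ.sup' univ_nonempty (fun e => f e ^ 2 / C e) := by
  classical
  set Φ : (E → ℝ) → ℝ := fun f =>
    (∑ e, r e * f e ^ 2) + W * univ.sup' univ_nonempty (fun e => f e ^ 2 / C e) with hΦ
  have hΦc : Continuous Φ := by
    apply Continuous.add
    · exact continuous_finset_sum _ fun e _ => continuous_const.mul ((continuous_apply e).pow 2)
    · exact continuous_const.mul <| Continuous.finset_sup'_apply univ_nonempty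
        fun e _ => ((continuous_apply e).pow 2).div_const _
  have hsupnn : ∀ f : E → ℝ, (0:ℝ) ≤ univ.sup' univ_nonempty (fun e => f e ^ 2 / C e) := by
    intro f
    obtain ⟨e⟩ := ‹Nonempty E›
    exact le_trans (div_nonneg (sq_nonneg (f e)) (hC e).le)
      (Finset.le_sup' (fun e => f e ^ 2 / C e) (mem_univ e))
  set rmin : ℝ := univ.inf' univ_nonempty r with hrmin
  have hrmin_pos : 0 < rmin := by
    obtain ⟨e, _, he⟩ := Finset.exists_mem_eq_inf' univ_nonempty r
    rw [hrmin, he]; exact hr e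
  have hnormsq : ∀ f : E → ℝ, ‖f‖ ^ 2 ≤ ∑ e, f e ^ 2 := by
    intro f
    have h1 : ‖f‖ ≤ Real.sqrt (∑ e, f e ^ 2) := by
      apply pi_norm_le_iff_of_nonneg (Real.sqrt_nonneg _) |>.2
      intro e
      rw [Real.norm_eq_abs, ← Real.sqrt_sq_eq_abs]
      exact Real.sqrt_le_sqrt (Finset.single_le_sum (fun i _ => sq_nonneg (f i)) (mem_univ e))
    calc ‖f‖ ^ 2 ≤ Real.sqrt (∑ e, f e ^ 2) ^ 2 := by
          exact pow_le_pow_left₀ (norm_nonneg f) h1 2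
      _ = ∑ e, f e ^ 2 := Real.sq_sqrt (Finset.sum_nonneg fun e _ => sq_nonneg _)
  have hΦlb : ∀ f : E → ℝ, rmin * ‖f‖ ^ 2 ≤ Φ f := by
    intro f
    have h2 : rmin * ‖f‖ ^ 2 ≤ rmin * ∑ e, f e ^ 2 :=
      mul_le_mul_of_nonneg_left (hnormsq f) hrmin_pos.le
    have h3 : rmin * ∑ e, f e ^ 2 ≤ ∑ e, r e * f e ^ 2 := by
      rw [Finset.mul_sum]
      exact Finset.sum_le_sum fun e _ =>
        mul_le_mul_of_nonneg_right (Finset.inf'_le r (mem_univ e)) (sq_nonneg _)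
    have h4 : 0 ≤ W * univ.sup' univ_nonempty (fun e => f e ^ 2 / C e) :=
      mul_nonneg hW (hsupnn f)
    rw [hΦ]; dsimp only; linarith
  have hΦ0 : 0 ≤ Φ f₀ := le_trans (by positivity) (hΦlb f₀)
  obtain ⟨ρ, hρ⟩ : ∃ ρ : ℝ, ρ = ‖f₀‖ + Real.sqrt (Φ f₀ / rmin) + 1 := ⟨_, rfl⟩
  have hsq := Real.sqrt_nonneg (Φ f₀ / rmin)
  have hn0 := norm_nonneg f₀
  have hρ0 : 0 ≤ ρ := by rw [hρ]; positivity
  have hρf₀ : ‖f₀‖ ≤ ρ := by rw [hρ]; linarith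
  have hρΦ : Φ f₀ ≤ rmin * ρ ^ 2 := by
    have h5 : Real.sqrt (Φ f₀ / rmin) ≤ ρ := by rw [hρ]; linarith
    have h6 : Φ f₀ / rmin ≤ ρ ^ 2 := by
      calc Φ f₀ / rmin = Real.sqrt (Φ f₀ / rmin) ^ 2 :=
            (Real.sq_sqrt (div_nonneg hΦ0 hrmin_pos.le)).symm
        _ ≤ ρ ^ 2 := pow_le_pow_left₀ (Real.sqrt_nonneg _) h5 2
    calc Φ f₀ = rmin * (Φ f₀ / rmin) := by field_simp
      _ ≤ rmin * ρ ^ 2 := mul_le_mul_of_nonneg_left h6 hrmin_pos.le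
  have hclosed : IsClosed {f : E → ℝ | B.transpose.mulVec f = d} := by
    have hcont : Continuous fun f : E → ℝ => B.transpose.mulVec f := by
      apply continuous_pi
      intro v
      exact continuous_finset_sum _ fun e _ => continuous_const.mul (continuous_apply e)
    exact isClosed_singleton.preimage hcont
  have hK : IsCompact ({f : E → ℝ | B.transpose.mulVec f = d} ∩ Metric.closedBall 0 ρ) :=
    (isCompact_closedBall 0 ρ).inter_left hclosed
  have hKne : f₀ ∈ {f : E → ℝ | B.transpose.mulVec f = d} ∩ Metric.closedBall 0 ρ :=
    ⟨hf₀, by simpa [Metric.mem_closedBall, dist_zero_right] using hρf₀⟩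
  obtain ⟨fs, hfsK, hmin⟩ := hK.exists_isMinOn ⟨f₀, hKne⟩ hΦc.continuousOn
  refine ⟨fs, hfsK.1, fun f hf => ?_⟩
  by_cases hb : ‖f‖ ≤ ρ
  · exact hmin ⟨hf, by simpa [Metric.mem_closedBall, dist_zero_right] using hb⟩
  · push_neg at hb
    have h7 : rmin * ρ ^ 2 < rmin * ‖f‖ ^ 2 :=
      mul_lt_mul_of_pos_left (pow_lt_pow_left₀ hb hρ0 (by norm_num)) hrmin_pos
    have h8 : Φ fs ≤ Φ f₀ := hmin hKne
    show Φ fs ≤ Φ f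
    exact le_trans h8 (le_trans hρΦ (le_trans h7.le (hΦlb f)))

lemma bem_mu {V E : Type*} [Fintype V] [Fintype E] [DecidableEq V] [Nonempty E]
    (B : Matrix E V ℝ)
    (d : V → ℝ)
    (r : E → ℝ) (hr : ∀ e, 0 < r e)
    (C : E → ℝ) (hC : ∀ e, 0 < C e) (W : ℝ) (hW : 0 ≤ W)
    (fs : E → ℝ) (hfs : B.transpose.mulVec fs = d)
    (hmin : ∀ f : E → ℝ, B.transpose.mulVec f = d →
        (∑ e, r e * fs e ^ 2) + W * univ.sup' univ_nonempty (fun e => fs e ^ 2 / C e)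
          ≤ (∑ e, r e * f e ^ 2) + W * univ.sup' univ_nonempty (fun e => f e ^ 2 / C e)) :
    ∃ μ : E → ℝ, (∀ e, 0 ≤ μ e) ∧
      (∀ e, fs e ^ 2 / C e ≠ univ.sup' univ_nonempty (fun e => fs e ^ 2 / C e) → μ e = 0) ∧
      (∑ e, μ e) = 1 ∧
      ∀ g : E → ℝ, B.transpose.mulVec g = 0 →
        ∑ e, (r e + W * μ e / C e) * fs e * g e = 0 := by
  classical
  by_contra hno
  set M := univ.sup' univ_nonempty (fun e => fs e ^ 2 / C e) with hM
  have hno' : ∀ μ : E → ℝ, (∀ e, 0 ≤ μ e) → (∀ e, fs e ^ 2 / C e ≠ M → μ e = 0) →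
      (∑ e, μ e) = 1 → ∃ g : E → ℝ, B.transpose.mulVec g = 0 ∧
        ∑ e, (r e + W * μ e / C e) * fs e * g e ≠ 0 := by
    intro μ h1 h2 h3
    by_contra h4
    push_neg at h4
    exact hno ⟨μ, h1, h2, h3, fun g hg => h4 g hg⟩
  set ι : (E → ℝ) ≃ₗ[ℝ] EuclideanSpace ℝ E := (WithLp.linearEquiv 2 ℝ (E → ℝ)).symm with hι
  -- the subspace of circulations
  let Z : Submodule ℝ (EuclideanSpace ℝ E) :=
    { carrier := {g | B.transpose.mulVec (ι.symm g) = 0}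
      add_mem' := fun {a b} ha hb => by
        simp only [Set.mem_setOf_eq, map_add, Matrix.mulVec_add] at *
        rw [ha, hb, add_zero]
      zero_mem' := by simp [Matrix.mulVec_zero]
      smul_mem' := fun c {a} ha => by
        simp only [Set.mem_setOf_eq, map_smul, Matrix.mulVec_smul] at *
        rw [ha, smul_zero] }
  have hZmem : ∀ g : EuclideanSpace ℝ E, g ∈ Z ↔ B.transpose.mulVec (ι.symm g) = 0 :=
    fun g => Iff.rfl
  -- the active set
  set A : Finset E := univ.filter (fun e => fs e ^ 2 / C e = M) with hA
  have hAne : A.Nonempty := by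
    obtain ⟨e, _, he⟩ := Finset.exists_mem_eq_sup' univ_nonempty (fun e => fs e ^ 2 / C e)
    exact ⟨e, mem_filter.2 ⟨mem_univ e, he.symm⟩⟩
  -- the simplex and its image
  set Δ : Set (E → ℝ) :=
    {μ | (∀ e, 0 ≤ μ e) ∧ (∀ e, e ∉ A → μ e = 0) ∧ (∑ e, μ e) = 1} with hΔ
  set F : (E → ℝ) → EuclideanSpace ℝ E :=
    fun μ => ι (fun e => (r e + W * μ e / C e) * fs e) with hF
  set s : Set (EuclideanSpace ℝ E) := F '' Δ with hs
  have hconv : Convex ℝ s := by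
    rintro v₁ ⟨μ₁, hμ₁, rfl⟩ v₂ ⟨μ₂, hμ₂, rfl⟩ a b ha hb hab
    refine ⟨a • μ₁ + b • μ₂, ⟨?_, ?_, ?_⟩, ?_⟩
    · intro e
      have := hμ₁.1 e; have := hμ₂.1 e
      simp only [Pi.add_apply, Pi.smul_apply, smul_eq_mul]
      positivity
    · intro e he
      simp only [Pi.add_apply, Pi.smul_apply, smul_eq_mul, hμ₁.2.1 e he, hμ₂.2.1 e he,
        mul_zero, add_zero]
    · simp only [Pi.add_apply, Pi.smul_apply, smul_eq_mul]
      rw [Finset.sum_add_distrib, ← Finset.mul_sum, ← Finset.mul_sum, hμ₁.2.2, hμ₂.2.2]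
      simpa using hab
    · rw [hF]
      show ι _ = a • ι _ + b • ι _
      rw [← map_smul, ← map_smul, ← map_add]
      congr 1
      funext e
      simp only [Pi.add_apply, Pi.smul_apply, smul_eq_mul]
      linear_combination (-(r e * fs e)) * hab
  have hΔc : IsCompact Δ := by
    have h1 : IsClosed {μ : E → ℝ | ∀ e, 0 ≤ μ e} := by
      rw [Set.setOf_forall]
      exact isClosed_iInter fun e => isClosed_le continuous_const (continuous_apply e)
    have h2 : IsClosed {μ : E → ℝ | ∀ e, e ∉ A → μ e = 0} := by
      rw [Set.setOf_forall]
      refine isClosed_iInter fun e => ?_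
      by_cases he : e ∈ A
      · simp only [he, not_true_eq_false, false_implies, Set.setOf_true]
        exact isClosed_univ
      · simp only [he, not_false_eq_true, true_implies]
        exact isClosed_eq (continuous_apply e) continuous_const
    have h3 : IsClosed {μ : E → ℝ | (∑ e, μ e) = 1} :=
      isClosed_eq (continuous_finset_sum _ fun e _ => continuous_apply e) continuous_const
    have hcl : IsClosed Δ := by
      have : Δ = {μ : E → ℝ | ∀ e, 0 ≤ μ e} ∩
          ({μ : E → ℝ | ∀ e, e ∉ A → μ e = 0} ∩ {μ : E → ℝ | (∑ e, μ e) = 1}) := by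
        ext μ; simp [hΔ, Set.mem_inter_iff, and_assoc]
      rw [this]
      exact h1.inter (h2.inter h3)
    refine (isCompact_closedBall (0 : E → ℝ) 1).of_isClosed_subset hcl ?_
    intro μ hμ
    simp only [Metric.mem_closedBall, dist_zero_right]
    refine pi_norm_le_iff_of_nonneg zero_le_one |>.2 fun e => ?_
    rw [Real.norm_eq_abs, abs_of_nonneg (hμ.1 e)]
    calc μ e ≤ ∑ e', μ e' :=
          Finset.single_le_sum (fun i _ => hμ.1 i) (mem_univ e)
      _ = 1 := hμ.2.2
  have hFc : Continuous F := by
    show Continuous fun μ : E → ℝ =>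
      (PiLp.continuousLinearEquiv 2 ℝ (fun _ : E => ℝ)).symm
        (fun e => (r e + W * μ e / C e) * fs e)
    refine (PiLp.continuousLinearEquiv 2 ℝ (fun _ : E => ℝ)).symm.continuous.comp ?_
    refine continuous_pi fun e => ?_
    exact (continuous_const.add ((continuous_const.mul (continuous_apply e)).div_const _)).mul
      continuous_const
  have hsc : IsCompact s := hΔc.image hFc
  have hdisj : Disjoint s (Zᗮ : Set (EuclideanSpace ℝ E)) := by
    rw [Set.disjoint_left]
    rintro v ⟨μ, hμ, rfl⟩ hv
    obtain ⟨g, hg, hgne⟩ := hno' μ hμ.1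
      (fun e hne => hμ.2.1 e (fun hmem => hne (mem_filter.1 hmem).2)) hμ.2.2
    apply hgne
    have hgZ : ι g ∈ Z := by
      rw [hZmem, LinearEquiv.symm_apply_apply]
      exact hg
    have := (Submodule.mem_orthogonal Z (F μ)).1 hv (ι g) hgZ
    rw [PiLp.inner_apply] at this
    simp only [RCLike.inner_apply, conj_trivial] at this
    rw [← this]
    refine Finset.sum_congr rfl fun e _ => ?_
    show (r e + W * μ e / C e) * fs e * g e = ((r e + W * μ e / C e) * fs e) * g e
    ring
  obtain ⟨φ, u, c, hsu, huc, hct⟩ :=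
    geometric_hahn_banach_compact_closed hconv hsc Zᗮ.convex
      Zᗮ.closed_of_finiteDimensional hdisj
  have hφ0 : ∀ b ∈ Zᗮ, φ b = 0 := by
    intro b hb
    by_contra hne
    have h := hct (((c - 1) / φ b) • b) (Submodule.smul_mem _ _ hb)
    rw [map_smul, smul_eq_mul, div_mul_cancel₀ _ hne] at h
    linarith
  have hc0 : c < 0 := by
    have h := hct 0 (Submodule.zero_mem _)
    rwa [map_zero] at h
  have hu0 : u < 0 := lt_trans huc hc0
  -- the separating direction
  set g0 : E → ℝ := fun e => φ (ι (fun j => if e = j then (1 : ℝ) else 0)) with hg0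
  have hrep : ∀ x : E → ℝ, φ (ι x) = ∑ e, x e * g0 e := by
    intro x
    have hx := pi_eq_sum_univ x
    calc φ (ι x) = φ (ι (∑ i, x i • fun j => if i = j then (1 : ℝ) else 0)) := by rw [← hx]
      _ = ∑ e, x e * g0 e := by
          rw [map_sum, map_sum]
          exact Finset.sum_congr rfl fun e _ => by rw [map_smul, map_smul, smul_eq_mul]
  have hg0Z : ι g0 ∈ Z := by
    have hZZ : ι g0 ∈ Zᗮᗮ := by
      rw [Submodule.mem_orthogonal]
      intro b hb
      have h2 := hrep (ι.symm b)
      rw [LinearEquiv.apply_symm_apply] at h2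
      rw [PiLp.inner_apply]
      simp only [RCLike.inner_apply, conj_trivial]
      have h3 : ∑ e, (ι g0) e * b e = ∑ e, (ι.symm b) e * g0 e :=
        Finset.sum_congr rfl fun e _ => mul_comm _ _
      rw [h3, ← h2]
      exact hφ0 b hb
    rwa [Submodule.orthogonal_orthogonal] at hZZ
  have hcirc : B.transpose.mulVec g0 = 0 := by
    have := (hZmem _).1 hg0Z
    rwa [LinearEquiv.symm_apply_apply] at this
  -- key strict inequalities on the active set
  have he_lt : ∀ e ∈ A, (∑ e', r e' * fs e' * g0 e') + W * (fs e * g0 e / C e) < u := by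
    intro e he
    have hmem : (fun e' => if e = e' then (1 : ℝ) else 0) ∈ Δ := by
      refine ⟨fun e' => by positivity, fun e' he' => ?_, by simp⟩
      · by_cases h : e = e'
        · exact absurd (h ▸ he) he'
        · simp [h]
    have h := hsu (F (fun e' => if e = e' then (1 : ℝ) else 0)) ⟨_, hmem, rfl⟩
    rw [hF] at h
    rw [hrep] at h
    beta_reduce at h
    have hsplit : ∑ e', ((r e' + W * (if e = e' then (1 : ℝ) else 0) / C e') * fs e') * g0 e'
        = (∑ e', r e' * fs e' * g0 e') + W * (fs e * g0 e / C e) := by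
      have : ∀ e' ∈ univ, ((r e' + W * (if e = e' then (1 : ℝ) else 0) / C e') * fs e') * g0 e'
          = r e' * fs e' * g0 e' + (if e = e' then W * (fs e * g0 e / C e) else 0) := by
        intro e' _
        by_cases h' : e = e'
        · subst h'; simp; ring
        · simp [if_neg h']
      rw [Finset.sum_congr rfl this, Finset.sum_add_distrib, Finset.sum_ite_eq]
      simp
    rw [hsplit] at h
    exact h
  set m := A.sup' hAne (fun e => 2 * fs e * g0 e / C e) with hm
  obtain ⟨e₀, he₀A, he₀⟩ := Finset.exists_mem_eq_sup' hAne (fun e => 2 * fs e * g0 e / C e)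
  rw [← hm] at he₀
  set K₁ := univ.sup' univ_nonempty (fun e => g0 e ^ 2 / C e) with hK₁
  have hK₁0 : 0 ≤ K₁ := by
    obtain ⟨e⟩ := ‹Nonempty E›
    exact le_trans (div_nonneg (sq_nonneg (g0 e)) (hC e).le)
      (Finset.le_sup' (fun e => g0 e ^ 2 / C e) (mem_univ e))
  have hL0 : 2 * (∑ e', r e' * fs e' * g0 e') + W * m < 0 := by
    have h := he_lt e₀ he₀A
    have h2 : m = 2 * (fs e₀ * g0 e₀ / C e₀) := by rw [he₀]; ring
    rw [h2]
    linarith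
  have ev1 : ∀ e : E, ∀ᶠ t in 𝓝[>] (0:ℝ),
      (fs e + t * g0 e) ^ 2 / C e ≤ M + t * m + t ^ 2 * K₁ := by
    intro e
    by_cases he : e ∈ A
    · have heM : fs e ^ 2 / C e = M := (mem_filter.1 he).2
      have h1 : 2 * fs e * g0 e / C e ≤ m := Finset.le_sup' (fun e => 2 * fs e * g0 e / C e) he
      have h2 : g0 e ^ 2 / C e ≤ K₁ := Finset.le_sup' (fun e => g0 e ^ 2 / C e) (mem_univ e)
      filter_upwards [self_mem_nhdsWithin] with t ht
      have ht' : (0:ℝ) < t := ht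
      have expand : (fs e + t * g0 e) ^ 2 / C e
          = fs e ^ 2 / C e + t * (2 * fs e * g0 e / C e) + t ^ 2 * (g0 e ^ 2 / C e) := by
        field_simp
        ring
      rw [expand, heM]
      have h3 := mul_le_mul_of_nonneg_left h1 ht'.le
      have h4 := mul_le_mul_of_nonneg_left h2 (sq_nonneg t)
      linarith
    · have heM : fs e ^ 2 / C e < M :=
        lt_of_le_of_ne (Finset.le_sup' (fun e => fs e ^ 2 / C e) (mem_univ e))
          (fun h => he (mem_filter.2 ⟨mem_univ e, h⟩))
      have hc1 : Continuous fun t : ℝ => (fs e + t * g0 e) ^ 2 / C e :=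
        ((continuous_const.add (continuous_id.mul continuous_const)).pow 2).div_const _
      have hc2 : Continuous fun t : ℝ => M + t * m + t ^ 2 * K₁ :=
        (continuous_const.add (continuous_id.mul continuous_const)).add
          ((continuous_id.pow 2).mul continuous_const)
      have h1 : Filter.Tendsto (fun t : ℝ => (fs e + t * g0 e) ^ 2 / C e) (𝓝[>] 0)
          (𝓝 (fs e ^ 2 / C e)) := by
        have := (hc1.tendsto 0).mono_left (nhdsWithin_le_nhds (s := Set.Ioi (0:ℝ)))
        simpa using this
      have h2 : Filter.Tendsto (fun t : ℝ => M + t * m + t ^ 2 * K₁) (𝓝[>] 0) (𝓝 M) := by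
        have := (hc2.tendsto 0).mono_left (nhdsWithin_le_nhds (s := Set.Ioi (0:ℝ)))
        simpa using this
      exact (h1.eventually_lt h2 heM).mono fun t ht => ht.le
  have ev2 : ∀ᶠ t in 𝓝[>] (0:ℝ),
      (2 * (∑ e', r e' * fs e' * g0 e') + W * m)
        + t * ((∑ e, r e * g0 e ^ 2) + W * K₁) < 0 := by
    have hc : Continuous fun t : ℝ =>
        (2 * (∑ e', r e' * fs e' * g0 e') + W * m)
          + t * ((∑ e, r e * g0 e ^ 2) + W * K₁) :=
      continuous_const.add (continuous_id.mul continuous_const)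
    have ht : Filter.Tendsto (fun t : ℝ =>
        (2 * (∑ e', r e' * fs e' * g0 e') + W * m)
          + t * ((∑ e, r e * g0 e ^ 2) + W * K₁)) (𝓝[>] (0:ℝ))
        (𝓝 (2 * (∑ e', r e' * fs e' * g0 e') + W * m)) := by
      have := (hc.tendsto 0).mono_left (nhdsWithin_le_nhds (s := Set.Ioi (0:ℝ)))
      simpa using this
    exact ht.eventually_lt_const hL0
  obtain ⟨t, h1, h2, h3⟩ :=
    ((Filter.eventually_all.2 ev1).and (ev2.and self_mem_nhdsWithin)).exists
  have ht0 : (0:ℝ) < t := h3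
  have hfeas : B.transpose.mulVec (fun e => fs e + t * g0 e) = d := by
    have hfe : (fun e => fs e + t * g0 e) = fs + t • g0 := rfl
    rw [hfe, Matrix.mulVec_add, Matrix.mulVec_smul, hfs, hcirc, smul_zero, add_zero]
  have hΦ := hmin _ hfeas
  beta_reduce at hΦ
  have hsup : univ.sup' univ_nonempty (fun e => (fs e + t * g0 e) ^ 2 / C e)
      ≤ M + t * m + t ^ 2 * K₁ := Finset.sup'_le _ _ fun e _ => h1 e
  have hsum : ∑ e, r e * (fs e + t * g0 e) ^ 2
      = (∑ e, r e * fs e ^ 2) + t * (2 * ∑ e, r e * fs e * g0 e)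
        + t ^ 2 * (∑ e, r e * g0 e ^ 2) := by
    have hterm : ∀ e ∈ univ, r e * (fs e + t * g0 e) ^ 2
        = r e * fs e ^ 2 + (t * (2 * (r e * fs e * g0 e)) + t ^ 2 * (r e * g0 e ^ 2)) :=
      fun e _ => by ring
    rw [Finset.sum_congr rfl hterm, Finset.sum_add_distrib, Finset.sum_add_distrib]
    simp only [← Finset.mul_sum]
    ring
  have hws := mul_le_mul_of_nonneg_left hsup hW
  have hneg : t * ((2 * (∑ e', r e' * fs e' * g0 e') + W * m)
      + t * ((∑ e, r e * g0 e ^ 2) + W * K₁)) < 0 :=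
    mul_neg_of_pos_of_neg ht0 h2
  rw [hsum] at hΦ
  have hexp : (∑ e, r e * fs e ^ 2) + t * (2 * ∑ e, r e * fs e * g0 e)
        + t ^ 2 * (∑ e, r e * g0 e ^ 2) + W * (M + t * m + t ^ 2 * K₁)
      = ((∑ e, r e * fs e ^ 2) + W * M)
        + t * ((2 * (∑ e', r e' * fs e' * g0 e') + W * m)
          + t * ((∑ e, r e * g0 e ^ 2) + W * K₁)) := by ring
  linarith [hΦ, hws, hneg, hexp]

/-- Minimax identity for budgeted energy maximization:
`max_{r' ≥ 0, ‖Cr'‖₁ ≤ W} min_{Bᵀf = d} fᵀ(R + diag r')f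
  = min_{Bᵀf = d} (fᵀRf + W ‖C^{-1/2} f‖_∞²)`,
stated as: there is a common value `t` attained as a greatest value of the
left-hand side and a least value of the right-hand side. -/
theorem budget_energy_minimax {V E : Type*} [Fintype V] [Fintype E] [DecidableEq V]
    (B : Matrix E V ℝ)
    (hrows : ∀ e : E, ∃ u v : V, u ≠ v ∧
      ∀ w, B e w = (if w = v then (1 : ℝ) else 0) - (if w = u then 1 else 0))
    (hconn : ∀ x : V → ℝ, B.mulVec x = 0 → ∃ c : ℝ, ∀ v, x v = c)
    (d : V → ℝ) (hd : ∑ v, d v = 0)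
    (r : E → ℝ) (hr : ∀ e, 0 < r e)
    (C : E → ℝ) (hC : ∀ e, 0 < C e)
    (W : ℝ) (hW : 0 ≤ W) :
    ∃ t : ℝ,
      IsGreatest {x : ℝ | ∃ r' : E → ℝ, (∀ e, 0 ≤ r' e) ∧ (∑ e, C e * r' e) ≤ W ∧
        x = sInf {y : ℝ | ∃ f : E → ℝ, B.transpose.mulVec f = d ∧
          y = ∑ e, (r e + r' e) * f e ^ 2}} t ∧
      IsLeast {y : ℝ | ∃ f : E → ℝ, B.transpose.mulVec f = d ∧
        y = (∑ e, r e * f e ^ 2) + W * ⨆ e, f e ^ 2 / C e} t := by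
  classical
  obtain ⟨f₀, hf₀⟩ := bem_feas B hconn d hd
  by_cases hE : Nonempty E
  · -- main case : E nonempty
    obtain ⟨fs, hfs, hmin⟩ := bem_min B d r hr C hC W hW f₀ hf₀
    set M := univ.sup' univ_nonempty (fun e => fs e ^ 2 / C e) with hM
    obtain ⟨μ, hμ0, hμA, hμ1, hμperp⟩ := bem_mu B d r hr C hC W hW fs hfs hmin
    have hsup_eq : ∀ f : E → ℝ,
        (⨆ e, f e ^ 2 / C e) = univ.sup' univ_nonempty (fun e => f e ^ 2 / C e) :=
      fun f => (Finset.sup'_univ_eq_ciSup _).symm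
    have hMe : ∀ e, fs e ^ 2 / C e ≤ M :=
      fun e => Finset.le_sup' (fun e => fs e ^ 2 / C e) (mem_univ e)
    have hM0 : 0 ≤ M := by
      obtain ⟨e⟩ := hE
      exact le_trans (div_nonneg (sq_nonneg (fs e)) (hC e).le) (hMe e)
    refine ⟨(∑ e, r e * fs e ^ 2) + W * M, ⟨?_, ?_⟩, ⟨fs, hfs, by rw [hsup_eq fs]⟩, ?_⟩
    · -- t is attained on the left side, with the optimal r'
      refine ⟨fun e => W * μ e / C e,
        fun e => div_nonneg (mul_nonneg hW (hμ0 e)) (hC e).le, ?_, ?_⟩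
      · have hterm : ∀ e ∈ univ, C e * (W * μ e / C e) = W * μ e :=
          fun e _ => by rw [mul_comm, div_mul_cancel₀ _ (hC e).ne']
        rw [Finset.sum_congr rfl hterm, ← Finset.mul_sum, hμ1, mul_one]
      · have hts : ∑ e, (r e + W * μ e / C e) * fs e ^ 2
            = (∑ e, r e * fs e ^ 2) + W * M := by
          have hterm : ∀ e ∈ univ, (r e + W * μ e / C e) * fs e ^ 2
              = r e * fs e ^ 2 + W * (μ e * M) := by
            intro e _
            by_cases h : fs e ^ 2 / C e = M
            · rw [← h]; ring
            · rw [hμA e h]; ring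
          rw [Finset.sum_congr rfl hterm, Finset.sum_add_distrib, ← Finset.mul_sum,
            ← Finset.sum_mul, hμ1, one_mul]
        have hleast : IsLeast {y : ℝ | ∃ f : E → ℝ, B.transpose.mulVec f = d ∧
            y = ∑ e, (r e + W * μ e / C e) * f e ^ 2}
            ((∑ e, r e * fs e ^ 2) + W * M) := by
          constructor
          · exact ⟨fs, hfs, hts.symm⟩
          · rintro y ⟨h, hh, rfl⟩
            have hg : B.transpose.mulVec (fun e => h e - fs e) = 0 := by
              have hfe : (fun e => h e - fs e) = h - fs := rfl
              rw [hfe, Matrix.mulVec_sub, hh, hfs, sub_self]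
            have hperp := hμperp _ hg
            beta_reduce at hperp
            have hterm : ∀ e ∈ univ, (r e + W * μ e / C e) * h e ^ 2
                = (r e + W * μ e / C e) * fs e ^ 2
                  + (2 * ((r e + W * μ e / C e) * fs e * (h e - fs e))
                    + (r e + W * μ e / C e) * (h e - fs e) ^ 2) :=
              fun e _ => by ring
            rw [Finset.sum_congr rfl hterm, Finset.sum_add_distrib, Finset.sum_add_distrib,
              ← Finset.mul_sum, hperp, mul_zero, zero_add, hts]
            have hnn : 0 ≤ ∑ e, (r e + W * μ e / C e) * (h e - fs e) ^ 2 :=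
              Finset.sum_nonneg fun e _ => mul_nonneg
                (add_nonneg (hr e).le (div_nonneg (mul_nonneg hW (hμ0 e)) (hC e).le)) (sq_nonneg _)
            linarith
        exact (hleast.csInf_eq).symm
    · -- t is an upper bound on the left side
      rintro x ⟨r', hr'0, hr'W, rfl⟩
      have hbdd : BddBelow {y : ℝ | ∃ f : E → ℝ, B.transpose.mulVec f = d ∧
          y = ∑ e, (r e + r' e) * f e ^ 2} := by
        refine ⟨0, ?_⟩
        rintro y ⟨f, hf, rfl⟩
        exact Finset.sum_nonneg fun e _ =>
          mul_nonneg (add_nonneg (hr e).le (hr'0 e)) (sq_nonneg _)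
      refine csInf_le_of_le hbdd ⟨fs, hfs, rfl⟩ ?_
      have h1 : ∀ e ∈ univ, (r e + r' e) * fs e ^ 2
          = r e * fs e ^ 2 + (C e * r' e) * (fs e ^ 2 / C e) := by
        intro e _
        have := (hC e).ne'
        field_simp
      rw [Finset.sum_congr rfl h1, Finset.sum_add_distrib]
      have h2 : ∑ e, (C e * r' e) * (fs e ^ 2 / C e) ≤ ∑ e, (C e * r' e) * M :=
        Finset.sum_le_sum fun e _ =>
          mul_le_mul_of_nonneg_left (hMe e) (mul_nonneg (hC e).le (hr'0 e))
      have h3 : ∑ e, (C e * r' e) * M ≤ W * M := by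
        rw [← Finset.sum_mul]
        exact mul_le_mul_of_nonneg_right hr'W hM0
      linarith
    · -- t is a lower bound on the right side
      rintro y ⟨f, hf, rfl⟩
      rw [hsup_eq f]
      exact hmin f hf
  · -- degenerate case : E empty
    have hEe : IsEmpty E := not_nonempty_iff.1 hE
    have hset : ∀ q : E → ℝ, {y : ℝ | ∃ f : E → ℝ, B.transpose.mulVec f = d ∧
        y = ∑ e, q e * f e ^ 2} = {0} := by
      intro q
      ext y
      simp only [Set.mem_setOf_eq, Set.mem_singleton_iff]
      constructor
      · rintro ⟨f, hf, rfl⟩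
        simp
      · rintro rfl
        exact ⟨f₀, hf₀, by simp⟩
    refine ⟨0, ⟨⟨fun _ => 0, fun e => le_refl 0, by simpa using hW, ?_⟩, ?_⟩, ⟨f₀, hf₀, ?_⟩, ?_⟩
    · rw [hset]
      exact (csInf_singleton 0).symm
    · rintro x ⟨r', hr'0, hr'W, rfl⟩
      rw [hset]
      exact le_of_eq (csInf_singleton 0)
    · rw [Real.iSup_of_isEmpty]
      simp
    · rintro y ⟨f, hf, rfl⟩
      rw [Real.iSup_of_isEmpty]
      simp
end

section
/- Optimality conditions identify a smoothed $\ell_2$-$\ell_{2p}$ minimizer as an electric flow: let $B$ be the incidence matrix of a connected graph, $R = \mathrm{diag}(r)$ with $r > 0$, $W > 0$, $p > 1$, and let $f^*$ minimize $f^TRf + W\|f\|_{2p}^2$ over flows with $B^Tf = d$, with $f^* \neq 0$. Define $r'_e = W \frac{(f^*_e)^{2(p-1)}}{\|(f^*)^2\|_p^{p-1}}$. Then $\|r'\|_q \le W$ where $1/p+1/q=1$, and $f^*$ is the electric $d$-flow for resistances $r + r'$, i.e., there exists $\phi$ with $B\phi = (R + \mathrm{diag}(r'))f^*$. -/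
open scoped Matrix

lemma hasDerivAt_sq_rpow (p : ℝ) (hp : 1 ≤ p) (x : ℝ) :
    HasDerivAt (fun x : ℝ => (x ^ 2) ^ p) (p * (x ^ 2) ^ (p - 1) * (2 * x)) x := by
  have h1 : HasDerivAt (fun x : ℝ => x ^ 2) (2 * x) x := by
    simpa using hasDerivAt_pow 2 x
  have := h1.rpow_const (p := p) (Or.inr hp)
  convert this using 1
  ring

lemma range_of_orthogonal_ker {V E : Type*} [Fintype V] [Fintype E] [DecidableEq V]
    (B : Matrix E V ℝ) (v : E → ℝ)
    (hv : ∀ h : E → ℝ, B.transpose.mulVec h = 0 → ∑ e, v e * h e = 0) :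
    ∃ φ : V → ℝ, B.mulVec φ = v := by
  classical
  let v' : EuclideanSpace ℝ E := WithLp.toLp 2 v
  let K : Submodule ℝ (EuclideanSpace ℝ E) :=
    { carrier := {x | ∃ φ : V → ℝ, B.mulVec φ = x}
      add_mem' := by
        rintro x y ⟨φ, hφ⟩ ⟨ψ, hψ⟩
        exact ⟨φ + ψ, by rw [Matrix.mulVec_add, hφ, hψ, WithLp.ofLp_add]⟩
      zero_mem' := ⟨0, Matrix.mulVec_zero B⟩
      smul_mem' := by
        rintro c x ⟨φ, hφ⟩
        exact ⟨c • φ, by rw [Matrix.mulVec_smul, hφ, WithLp.ofLp_smul]⟩ }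
  have hdot : ∀ (w : V → ℝ) (u : E → ℝ),
      ∑ e, B.mulVec w e * u e = ∑ x, w x * B.transpose.mulVec u x := by
    intro w u
    simp only [Matrix.mulVec, dotProduct, Matrix.transpose_apply, Finset.sum_mul,
      Finset.mul_sum]
    rw [Finset.sum_comm]
    congr 1; ext x; congr 1; ext e; ring
  have hvK : v' ∈ Kᗮᗮ := by
    rw [Submodule.mem_orthogonal]
    intro u hu
    have hBu : B.transpose.mulVec u = 0 := by
      have h0 := hu (WithLp.toLp 2 (B.mulVec (B.transpose.mulVec u))) ⟨_, rfl⟩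
      have h1 : ∑ x, B.transpose.mulVec u x * B.transpose.mulVec u x = 0 := by
        rw [← hdot]
        simpa [PiLp.inner_apply, RCLike.inner_apply, mul_comm] using h0
      funext x
      have h2 := (Finset.sum_eq_zero_iff_of_nonneg (fun x _ => mul_self_nonneg _)).1 h1 x
        (Finset.mem_univ x)
      simpa using mul_self_eq_zero.1 h2
    have h3 := hv u hBu
    have : (inner ℝ u v' : ℝ) = ∑ e, v e * u e := by
      simp only [PiLp.inner_apply, RCLike.inner_apply, starRingEnd_apply, star_trivial]
      rfl
    rw [this, h3]
  rw [Submodule.orthogonal_orthogonal] at hvK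
  exact hvK

/-- Optimality conditions identify a smoothed `ℓ₂`-`ℓ_{2p}` minimizer as an
electric flow: if `f*` minimizes `fᵀRf + W‖f‖_{2p}²` over flows with `Bᵀf = d`
and `f* ≠ 0`, then `r'_e = W (f*_e)^{2(p-1)} / ‖(f*)²‖_p^{p-1}` satisfies
`‖r'‖_q ≤ W` and `f*` is the electric `d`-flow for resistances `r + r'`,
i.e., `(R + diag r') f* = Bφ` for some potentials `φ`. -/
theorem smoothed_l2lp_minimizer_is_electric {V E : Type*} [Fintype V] [Fintype E]
    [DecidableEq V]
    (B : Matrix E V ℝ)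
    (hrows : ∀ e : E, ∃ u v : V, u ≠ v ∧
      ∀ w, B e w = (if w = v then (1 : ℝ) else 0) - (if w = u then 1 else 0))
    (hconn : ∀ x : V → ℝ, B.mulVec x = 0 → ∃ c : ℝ, ∀ v, x v = c)
    (d : V → ℝ) (hd : ∑ v, d v = 0)
    (r : E → ℝ) (hr : ∀ e, 0 < r e)
    (W : ℝ) (hW : 0 < W)
    (p q : ℝ) (hp : 1 < p) (hpq : 1 / p + 1 / q = 1)
    (fstar : E → ℝ) (hfd : B.transpose.mulVec fstar = d) (hfne : fstar ≠ 0)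
    (hfmin : ∀ f : E → ℝ, B.transpose.mulVec f = d →
      (∑ e, r e * fstar e ^ 2) + W * (∑ e, (fstar e ^ 2) ^ p) ^ (1 / p) ≤
        (∑ e, r e * f e ^ 2) + W * (∑ e, (f e ^ 2) ^ p) ^ (1 / p))
    (r' : E → ℝ)
    (hr' : r' = fun e =>
      W * (fstar e ^ 2) ^ (p - 1) / ((∑ e', (fstar e' ^ 2) ^ p) ^ (1 / p)) ^ (p - 1)) :
    (∑ e, r' e ^ q) ^ (1 / q) ≤ W ∧
    ∃ φ : V → ℝ, B.mulVec φ = fun e => (r e + r' e) * fstar e := by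
  have hp0 : (0:ℝ) < p := lt_trans one_pos hp
  have hp1 : p - 1 ≠ 0 := ne_of_gt (by linarith)
  have hq0 : q ≠ 0 := by
    intro h0
    rw [h0, div_zero, add_zero] at hpq
    have : p = 1 := by field_simp at hpq; linarith
    linarith
  have hq : q = p / (p - 1) := by
    have hpq' : q + p = p * q := by field_simp at hpq; linarith
    have h1 : q * (p - 1) = p := by linear_combination -hpq'
    rw [eq_div_iff hp1]; linarith
  have hqpos : 0 < q := by rw [hq]; exact div_pos hp0 (by linarith)
  set T := ∑ e', (fstar e' ^ 2) ^ p with hT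
  have hTpos : 0 < T := by
    obtain ⟨e, he⟩ : ∃ e, fstar e ≠ 0 := by
      by_contra hc
      push_neg at hc
      exact hfne (funext hc)
    apply Finset.sum_pos' (fun i _ => Real.rpow_nonneg (sq_nonneg _) p)
    exact ⟨e, Finset.mem_univ e, Real.rpow_pos_of_pos (by positivity) p⟩
  have hpq1 : (p - 1) * q = p := by rw [hq]; field_simp
  constructor
  · -- norm bound
    have hstep : ∀ e, r' e ^ q = W ^ q * (fstar e ^ 2) ^ p / T := by
      intro e
      rw [hr']
      have h2 : (0:ℝ) ≤ fstar e ^ 2 := sq_nonneg _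
      rw [Real.div_rpow (by positivity) (by positivity),
        Real.mul_rpow hW.le (by positivity),
        ← Real.rpow_mul h2,
        ← Real.rpow_mul (Real.rpow_nonneg hTpos.le (1/p)), hpq1,
        ← Real.rpow_mul hTpos.le]
      rw [one_div, inv_mul_cancel₀ hp0.ne', Real.rpow_one]
    have hsum : ∑ e, r' e ^ q = W ^ q := by
      simp only [hstep]
      rw [← Finset.sum_div, ← Finset.mul_sum, ← hT, mul_div_assoc, div_self hTpos.ne', mul_one]
    rw [hsum, ← Real.rpow_mul hW.le, mul_one_div_cancel hq0, Real.rpow_one]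
  · -- electric flow
    have hr'e : ∀ e, r' e = W * (fstar e ^ 2) ^ (p - 1) * T ^ (1/p - 1) := by
      intro e
      have hc : (1:ℝ)/p - 1 = -(1/p * (p-1)) := by field_simp; ring
      rw [hr']
      simp only
      rw [← Real.rpow_mul hTpos.le, hc, Real.rpow_neg hTpos.le, ← div_eq_mul_inv]
    have key : ∀ h : E → ℝ, B.transpose.mulVec h = 0 →
        ∑ e, ((r e + r' e) * fstar e) * h e = 0 := by
      intro h hh
      have hmem : ∀ t : ℝ, B.transpose.mulVec (fun e => fstar e + t * h e) = d := by
        intro t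
        have heq : (fun e => fstar e + t * h e) = fstar + t • h := by
          funext e; simp [smul_eq_mul]
        rw [heq, Matrix.mulVec_add, Matrix.mulVec_smul, hfd, hh, smul_zero, add_zero]
      set ψ : ℝ → ℝ := fun t =>
        (∑ e, r e * (fstar e + t * h e) ^ 2) +
          W * (∑ e, ((fstar e + t * h e) ^ 2) ^ p) ^ (1/p) with hψdef
      have hmin : IsLocalMin ψ 0 := by
        refine Filter.Eventually.of_forall fun t => ?_
        have := hfmin (fun e => fstar e + t * h e) (hmem t)
        simpa [ψ] using this
      have hl : ∀ e, HasDerivAt (fun t : ℝ => fstar e + t * h e) (h e) 0 := by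
        intro e
        simpa using ((hasDerivAt_id (0:ℝ)).mul_const (h e)).const_add (fstar e)
      have hsum1 : HasDerivAt (fun t => ∑ e, r e * (fstar e + t * h e) ^ 2)
          (∑ e, r e * (2 * fstar e * h e)) 0 := by
        apply HasDerivAt.fun_sum
        intro e _
        have h2 := ((hl e).pow 2).const_mul (r e)
        convert h2 using 1
        all_goals norm_num
        rfl
      have hu : HasDerivAt (fun t => ∑ e, ((fstar e + t * h e) ^ 2) ^ p)
          (∑ e, p * (fstar e ^ 2) ^ (p - 1) * (2 * fstar e) * h e) 0 := by
        apply HasDerivAt.fun_sum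
        intro e _
        have h0 : fstar e + 0 * h e = fstar e := by ring
        have houter : HasDerivAt (fun y : ℝ => (y ^ 2) ^ p)
            (p * (fstar e ^ 2) ^ (p - 1) * (2 * fstar e)) (fstar e + 0 * h e) := by
          rw [h0]; exact hasDerivAt_sq_rpow p hp.le (fstar e)
        have := houter.comp 0 (hl e)
        exact this
      have hu0 : ∑ e, ((fstar e + (0:ℝ) * h e) ^ 2) ^ p = T := by
        rw [hT]; congr 1; funext e; rw [zero_mul, add_zero]
      have houter2 : HasDerivAt (fun y : ℝ => W * y ^ (1/p)) (W * (1/p * T ^ (1/p - 1)))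
          (∑ e, ((fstar e + (0:ℝ) * h e) ^ 2) ^ p) := by
        rw [hu0]
        exact (Real.hasDerivAt_rpow_const (Or.inl hTpos.ne')).const_mul W
      have hcomp := houter2.comp 0 hu
      have hψ : HasDerivAt ψ
          ((∑ e, r e * (2 * fstar e * h e)) +
            W * (1/p * T ^ (1/p - 1)) *
              (∑ e, p * (fstar e ^ 2) ^ (p - 1) * (2 * fstar e) * h e)) 0 :=
        hsum1.add hcomp
      have hD := hmin.hasDerivAt_eq_zero hψ
      have h2D : (∑ e, r e * (2 * fstar e * h e)) +
          W * (1/p * T ^ (1/p - 1)) *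
            (∑ e, p * (fstar e ^ 2) ^ (p - 1) * (2 * fstar e) * h e) =
          2 * ∑ e, ((r e + r' e) * fstar e) * h e := by
        rw [Finset.mul_sum, Finset.mul_sum, ← Finset.sum_add_distrib]
        apply Finset.sum_congr rfl
        intro e _
        rw [hr'e e]
        field_simp
      rw [h2D] at hD
      linarith
    exact range_of_orthogonal_ker B (fun e => (r e + r' e) * fstar e) key
end
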